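/- Let H, F, E be Hilbert spaces, A ∈ L(H,F), T ∈ L(H,E), b ∈ F, W ∈ L(F)⁺ with W^{1/2} ∈ S₂. If (A₀, x₀) minimizes the regularized weighted total least squares objective, then (1+‖x₀‖²)·T*Tx₀ + A*W(Ax₀ − b) = (‖Ax₀−b‖²_W / (1+‖x₀‖²))·x₀, and moreover WA₀ = WA − ⟨·, x₀⟩ W(Ax₀−b)/(1+‖x₀‖²). -/
import Mathlib
set_option maxHeartbeats 1000000

open ContinuousLinearMap

local notation "⟪" x ", " y "⟫_ℝ" => @inner ℝ _ _ x y

private lemma lin_coeff_zero {a c : ℝ} (ha : 0 ≤ a)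
    (h : ∀ t : ℝ, 0 ≤ a * t ^ 2 + c * t) : c = 0 := by
  by_contra hc
  have ha1 : (0:ℝ) < a + 1 := by linarith
  have h1 := h (-c / (a + 1))
  have h2 : a * (-c / (a + 1)) ^ 2 + c * (-c / (a + 1)) = -(c ^ 2 / (a + 1) ^ 2) := by
    field_simp
    ring
  rw [h2] at h1
  have h3 : 0 < c ^ 2 / (a + 1) ^ 2 := by positivity
  linarith

private lemma parseval_sq {F ι : Type*} [NormedAddCommGroup F] [InnerProductSpace ℝ F]
    [CompleteSpace F] (f : HilbertBasis ι ℝ F) (x : F) :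
    HasSum (fun j => ⟪x, f j⟫_ℝ ^ 2) (‖x‖ ^ 2) := by
  have h := f.hasSum_inner_mul_inner x x
  have : (fun j => ⟪x, f j⟫_ℝ * ⟪f j, x⟫_ℝ) = fun j => ⟪x, f j⟫_ℝ ^ 2 := by
    funext j; rw [pow_two, real_inner_comm x (f j)]
  rw [this, real_inner_self_eq_norm_sq] at h
  exact h

private lemma hs_summable {H F ι ι' : Type*}
    [NormedAddCommGroup H] [InnerProductSpace ℝ H] [CompleteSpace H]
    [NormedAddCommGroup F] [InnerProductSpace ℝ F] [CompleteSpace F]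
    (R : F →L[ℝ] F) (hR : IsSelfAdjoint R)
    (f : HilbertBasis ι' ℝ F) (hHS : Summable fun j => ‖R (f j)‖ ^ 2)
    (e : HilbertBasis ι ℝ H) (B : H →L[ℝ] F) :
    Summable fun i => ‖(R.comp B) (e i)‖ ^ 2 := by
  have hpt : ∀ j i, ⟪(R.comp B) (e i), f j⟫_ℝ ^ 2 = ⟪adjoint (R.comp B) (f j), e i⟫_ℝ ^ 2 := by
    intro j i
    rw [adjoint_inner_left, real_inner_comm]
  have key : Summable (fun p : ι' × ι => ⟪(R.comp B) (e p.2), f p.1⟫_ℝ ^ 2) := by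
    rw [summable_prod_of_nonneg (fun p => sq_nonneg _)]
    constructor
    · intro j
      have := (parseval_sq e (adjoint (R.comp B) (f j))).summable
      exact this.congr (fun i => (hpt j i).symm)
    · have hval : ∀ j, (∑' i, ⟪(R.comp B) (e (j, i).2), f (j, i).1⟫_ℝ ^ 2)
          = ‖adjoint (R.comp B) (f j)‖ ^ 2 := by
        intro j
        rw [tsum_congr (fun i => hpt j i)]
        exact (parseval_sq e (adjoint (R.comp B) (f j))).tsum_eq
      have hbd : Summable fun j => ‖adjoint (R.comp B) (f j)‖ ^ 2 := by
        apply Summable.of_nonneg_of_le (fun j => sq_nonneg _) _ (hHS.mul_left (‖adjoint B‖^2))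
        intro j
        have h1 : adjoint (R.comp B) (f j) = adjoint B (R (f j)) := by
          rw [adjoint_comp, hR.adjoint_eq, comp_apply]
        rw [h1]
        calc ‖adjoint B (R (f j))‖ ^ 2 ≤ (‖adjoint B‖ * ‖R (f j)‖)^2 := by
              apply sq_le_sq'
              · nlinarith [norm_nonneg (adjoint B (R (f j))), mul_nonneg (norm_nonneg (adjoint B)) (norm_nonneg (R (f j)))]
              · exact (adjoint B).le_opNorm _
          _ = ‖adjoint B‖^2 * ‖R (f j)‖^2 := by ring
      exact hbd.congr (fun j => (hval j).symm)
  have key2 : Summable (fun p : ι × ι' => ⟪(R.comp B) (e p.1), f p.2⟫_ℝ ^ 2) :=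
    (Equiv.prodComm ι ι').summable_iff.mpr key
  have h3 := ((summable_prod_of_nonneg (f := fun p : ι × ι' => ⟪(R.comp B) (e p.1), f p.2⟫_ℝ ^ 2) (fun p => sq_nonneg _)).mp key2).2
  apply h3.congr
  intro i
  exact (parseval_sq f ((R.comp B) (e i))).tsum_eq

/-- Hilbert spaces `H, F, E`, `A ∈ L(H,F)`, `T ∈ L(H,E)`, `b ∈ F`, `W ∈ L(F)`
positive with square root `R = W^{1/2}` Hilbert–Schmidt.  If `(A₀, x₀)` minimizes the
regularized weighted total least squares objective, then
`(1+‖x₀‖²)T*Tx₀ + A*W(Ax₀ − b) = (‖Ax₀−b‖²_W/(1+‖x₀‖²))x₀`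
and `WA₀ = WA − ⟨·, x₀⟩W(Ax₀−b)/(1+‖x₀‖²)`. -/
theorem stmt9_necessary_conditions
    {H F E ι ι' : Type*} [NormedAddCommGroup H] [InnerProductSpace ℝ H] [CompleteSpace H]
    [NormedAddCommGroup F] [InnerProductSpace ℝ F] [CompleteSpace F]
    [NormedAddCommGroup E] [InnerProductSpace ℝ E] [CompleteSpace E]
    (A A₀ : H →L[ℝ] F) (T : H →L[ℝ] E) (b : F) (x₀ : H) (W R : F →L[ℝ] F)
    (hR : R.IsPositive) (hRW : R.comp R = W)
    (f : HilbertBasis ι' ℝ F) (hHS : Summable fun i => ‖R (f i)‖ ^ 2)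
    (e : HilbertBasis ι ℝ H)
    (hmin : ∀ (X : H →L[ℝ] F) (x : H),
        ‖T x₀‖ ^ 2 + (∑' i, ‖(R.comp (A - A₀)) (e i)‖ ^ 2) + ‖R (A₀ x₀ - b)‖ ^ 2 ≤
          ‖T x‖ ^ 2 + (∑' i, ‖(R.comp (A - X)) (e i)‖ ^ 2) + ‖R (X x - b)‖ ^ 2) :
    (1 + ‖x₀‖ ^ 2) • ((adjoint T) (T x₀)) + (adjoint A) (W (A x₀ - b)) =
        (‖R (A x₀ - b)‖ ^ 2 / (1 + ‖x₀‖ ^ 2)) • x₀ ∧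
    W.comp A₀ = W.comp A -
        (1 / (1 + ‖x₀‖ ^ 2)) • (innerSL ℝ x₀).smulRight (W (A x₀ - b)) := by
  set D : H →L[ℝ] F := A - A₀ with hD
  set r' : F := A₀ x₀ - b with hr'
  set r : F := A x₀ - b with hr
  set s : ℝ := 1 + ‖x₀‖ ^ 2 with hs
  have hs0 : (0:ℝ) < s := by positivity
  have hsne : s ≠ 0 := ne_of_gt hs0
  -- inner product facts about R and W
  have hRin : ∀ x y : F, ⟪R x, y⟫_ℝ = ⟪x, R y⟫_ℝ := by
    intro x y
    conv_lhs => rw [← hR.isSelfAdjoint.adjoint_eq]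
    exact adjoint_inner_left R y x
  have hWapp : ∀ x : F, W x = R (R x) := by
    intro x; rw [← hRW]; rfl
  have hRRW : ∀ x y : F, ⟪R x, R y⟫_ℝ = ⟪x, W y⟫_ℝ := by
    intro x y; rw [hRin, hWapp]
  have hWin : ∀ x y : F, ⟪W x, y⟫_ℝ = ⟪R x, R y⟫_ℝ := by
    intro x y; rw [hWapp, hRin]
  -- Step A : variation in x
  have stepA : adjoint T (T x₀) + adjoint A₀ (W r') = 0 := by
    apply ext_inner_right ℝ
    intro h
    rw [inner_zero_left, inner_add_left, adjoint_inner_left, adjoint_inner_left]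
    have key : ∀ t : ℝ, 0 ≤ (‖T h‖ ^ 2 + ‖R (A₀ h)‖ ^ 2) * t ^ 2
        + (2 * (⟪T x₀, T h⟫_ℝ + ⟪R r', R (A₀ h)⟫_ℝ)) * t := by
      intro t
      have hm := hmin A₀ (x₀ + t • h)
      have e1 : ‖T (x₀ + t • h)‖ ^ 2
          = ‖T x₀‖ ^ 2 + 2 * (t * ⟪T x₀, T h⟫_ℝ) + t ^ 2 * ‖T h‖ ^ 2 := by
        rw [map_add, map_smul, norm_add_sq_real, real_inner_smul_right, norm_smul]
        simp [mul_pow, sq_abs]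
      have e2 : ‖R (A₀ (x₀ + t • h) - b)‖ ^ 2
          = ‖R r'‖ ^ 2 + 2 * (t * ⟪R r', R (A₀ h)⟫_ℝ) + t ^ 2 * ‖R (A₀ h)‖ ^ 2 := by
        have h1 : A₀ (x₀ + t • h) - b = r' + t • A₀ h := by
          rw [map_add, map_smul, hr']; abel
        rw [h1, map_add, map_smul, norm_add_sq_real, real_inner_smul_right, norm_smul]
        simp [mul_pow, sq_abs]
      rw [e1, e2] at hm
      nlinarith [hm]
    have h0 := lin_coeff_zero (by positivity) key
    have h1 : ⟪T x₀, T h⟫_ℝ + ⟪R r', R (A₀ h)⟫_ℝ = 0 := by linarith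
    rw [hWin]
    linarith
  -- Step B : variation in X
  have S1 : Summable fun i => ‖(R.comp D) (e i)‖ ^ 2 :=
    hs_summable R hR.isSelfAdjoint f hHS e D
  have stepB : ∀ u : F, adjoint D (W u) = ⟪R r', R u⟫_ℝ • x₀ := by
    intro u
    apply ext_inner_left ℝ
    intro v
    set w : H := adjoint D (W u) with hw
    have S2 := e.hasSum_inner_mul_inner v w
    have S3 := parseval_sq e v
    have key : ∀ t : ℝ, 0 ≤ (‖v‖ ^ 2 * ‖R u‖ ^ 2 + ⟪v, x₀⟫_ℝ ^ 2 * ‖R u‖ ^ 2) * t ^ 2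
        + (2 * (⟪v, x₀⟫_ℝ * ⟪R r', R u⟫_ℝ - ⟪v, w⟫_ℝ)) * t := by
      intro t
      set X : H →L[ℝ] F := A₀ + t • (innerSL ℝ v).smulRight u with hX
      have hm := hmin X x₀
      have hfun : ∀ i, ‖(R.comp (A - X)) (e i)‖ ^ 2
          = ‖(R.comp D) (e i)‖ ^ 2 + ((-2 * t) * (⟪v, e i⟫_ℝ * ⟪e i, w⟫_ℝ)
            + (t ^ 2 * ‖R u‖ ^ 2) * ⟪v, e i⟫_ℝ ^ 2) := by
        intro i
        have h1 : (R.comp (A - X)) (e i) = (R.comp D) (e i) - (t * ⟪v, e i⟫_ℝ) • R u := by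
          simp only [hX, comp_apply, sub_apply, add_apply, smul_apply, smulRight_apply,
            innerSL_apply_apply, hD, map_sub, map_smul, smul_smul]
          rw [map_add, map_smul]
          abel
        have h2 : ⟪(R.comp D) (e i), R u⟫_ℝ = ⟪e i, w⟫_ℝ := by
          rw [comp_apply, hRRW, hw]
          exact (adjoint_inner_right D (e i) (W u)).symm
        rw [h1, norm_sub_sq_real, real_inner_smul_right, h2, norm_smul]
        simp only [Real.norm_eq_abs, mul_pow, sq_abs]
        ring
      have mid : ∑' i, ‖(R.comp (A - X)) (e i)‖ ^ 2
          = (∑' i, ‖(R.comp D) (e i)‖ ^ 2)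
            + ((-2 * t) * ⟪v, w⟫_ℝ + (t ^ 2 * ‖R u‖ ^ 2) * ‖v‖ ^ 2) := by
        rw [tsum_congr hfun]
        exact (S1.hasSum.add ((S2.mul_left (-2 * t)).add
          (S3.mul_left (t ^ 2 * ‖R u‖ ^ 2)))).tsum_eq
      have e3 : ‖R (X x₀ - b)‖ ^ 2 = ‖R r'‖ ^ 2 + 2 * ((t * ⟪v, x₀⟫_ℝ) * ⟪R r', R u⟫_ℝ)
          + (t * ⟪v, x₀⟫_ℝ) ^ 2 * ‖R u‖ ^ 2 := by
        have h1 : X x₀ - b = r' + (t * ⟪v, x₀⟫_ℝ) • u := by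
          simp only [hX, add_apply, smul_apply, smulRight_apply, innerSL_apply_apply, smul_smul, hr']
          abel
        rw [h1, map_add, map_smul, norm_add_sq_real, real_inner_smul_right, norm_smul]
        simp only [Real.norm_eq_abs, mul_pow, sq_abs]
      rw [mid, e3] at hm
      nlinarith [hm]
    have h0 := lin_coeff_zero (by positivity) key
    rw [real_inner_smul_right]
    nlinarith [h0]
  -- consequences
  have hWD : ∀ h : H, W (D h) = ⟪x₀, h⟫_ℝ • W r' := by
    intro h
    apply ext_inner_right ℝ
    intro u
    rw [hWin, hRRW, show ⟪D h, W u⟫_ℝ = ⟪h, adjoint D (W u)⟫_ℝ from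
      (adjoint_inner_right D h (W u)).symm, stepB u, real_inner_smul_right,
      real_inner_smul_left, hWin, real_inner_comm h x₀]
    ring
  have hrel : W r = s • W r' := by
    have h1 : r - r' = D x₀ := by
      simp only [hr, hr', hD, sub_apply]
      abel
    have h2 := hWD x₀
    rw [show D x₀ = r - r' from by rw [← h1], map_sub, real_inner_self_eq_norm_sq] at h2
    have h3 : W r = W r' + ‖x₀‖ ^ 2 • W r' := by
      rw [← h2]
      abel
    rw [h3, hs, add_smul, one_smul]
  have hw' : W r' = s⁻¹ • W r := by
    rw [hrel, smul_smul, inv_mul_cancel₀ hsne, one_smul]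
  have hDadj : adjoint D = adjoint A - adjoint A₀ := by
    rw [hD]
    exact map_sub adjoint A A₀
  constructor
  · -- conclusion 1
    have h1 : adjoint T (T x₀) = - adjoint A₀ (W r') := by
      rw [eq_neg_iff_add_eq_zero]
      exact stepA
    have h2 : adjoint A₀ (W r) = s • adjoint A₀ (W r') := by
      rw [hrel, map_smul]
    have h3 : adjoint D (W r) = (s⁻¹ * ‖R r‖ ^ 2) • x₀ := by
      rw [stepB r]
      congr 1
      rw [show ⟪R r', R r⟫_ℝ = ⟪W r', r⟫_ℝ from (hWin r' r).symm, hw',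
        real_inner_smul_left]
      congr 1
      rw [hWin, real_inner_self_eq_norm_sq]
    calc s • adjoint T (T x₀) + adjoint A (W r)
        = adjoint A (W r) - s • adjoint A₀ (W r') := by
          rw [h1, smul_neg]
          abel
      _ = adjoint A (W r) - adjoint A₀ (W r) := by rw [← h2]
      _ = adjoint D (W r) := by rw [hDadj, sub_apply]
      _ = (‖R r‖ ^ 2 / s) • x₀ := by rw [h3, div_eq_inv_mul]
  · -- conclusion 2
    ext h
    simp only [comp_apply, sub_apply, smul_apply, smulRight_apply, innerSL_apply_apply]
    have h1 : W (A h) - W (A₀ h) = W (D h) := by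
      rw [hD, sub_apply, map_sub]
    have h2 : W (D h) = ⟪x₀, h⟫_ℝ • ((1 / s) • W r) := by
      rw [hWD, hw', one_div]
    have h3 : W (A₀ h) = W (A h) - ⟪x₀, h⟫_ℝ • ((1 / s) • W r) := by
      rw [← h2, ← h1]
      abel
    rw [h3, smul_comm]
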